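/- Let C be a monoidal category with coequalizers preserved by tensoring on both sides and let A be an algebra in C. The forgetful functor U : _A C_A → C, together with the structure morphisms U_{M,N} := π_{M,N} : U(M)⊗U(N) = M⊗N → M⊗_A N = U(M⊗_A N) and U_0 := u_A : 𝟙 → A = U(A), is a lax monoidal functor; i.e. these data satisfy the associativity constraint U_{M,N⊗_A P} ∘ (id_{U(M)}⊗U_{N,P}) ∘ α_{U(M),U(N),U(P)} = U(α^A_{M,N,P}) ∘ U_{M⊗_A N,P} ∘ (U_{M,N}⊗id_{U(P)}) and the unitality constraints U(l^A_M)^{-1} ∘ l_{U(M)} = U_{A,M} ∘ (U_0⊗id_{U(M)}) and U(r^A_M)^{-1} ∘ r_{U(M)} = U_{M,A} ∘ (id_{U(M)}⊗U_0). -/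

import Mathlib

open CategoryTheory MonoidalCategory CategoryTheory.Limits

namespace Stmt17

variable {C : Type*} [Category C] [MonoidalCategory C]
variable [HasCoequalizers C]
variable [∀ X : C, PreservesColimitsOfSize.{0, 0} (tensorLeft X)]
variable [∀ X : C, PreservesColimitsOfSize.{0, 0} (tensorRight X)]

/-- The canonical projection `π_{M,N} : U(M) ⊗ U(N) = M.X ⊗ N.X ⟶ U(M ⊗_A N)`, which is the
structure morphism `U_{M,N}` of the forgetful functor `U : _A C_A ⥤ C`. -/
noncomputable def piB {A B D : Mon C} (M : Bimod A B) (N : Bimod B D) :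
    M.X ⊗ N.X ⟶ Bimod.TensorBimod.X M N :=
  coequalizer.π _ _

/-- **Statement 17.** Let `C` be a monoidal category with coequalizers preserved by tensoring
on both sides and `A` an algebra in `C`.  The forgetful functor `U : _A C_A ⥤ C`, with
`U_{M,N} := π_{M,N}` and `U₀ := u_A`, is a lax monoidal functor: the associativity constraint
`U_{M,N⊗_A P} ∘ (id ⊗ U_{N,P}) ∘ α = U(α^A_{M,N,P}) ∘ U_{M⊗_A N,P} ∘ (U_{M,N} ⊗ id)` and the
unitality constraints `U(l^A_M)⁻¹ ∘ l_{U(M)} = U_{A,M} ∘ (U₀ ⊗ id)` and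
`U(r^A_M)⁻¹ ∘ r_{U(M)} = U_{M,A} ∘ (id ⊗ U₀)` hold. -/
theorem forgetful_functor_lax_monoidal
    (A : Mon C) (M N P : Bimod A A) :
    -- associativity constraint
    ((α_ M.X N.X P.X).hom ≫ (M.X ◁ piB N P) ≫ piB M (N.tensorBimod P) =
      (piB M N ▷ P.X) ≫ piB (M.tensorBimod N) P ≫
        (Bimod.associatorBimod M N P).hom.hom) ∧
    -- left unitality constraint
    ((λ_ M.X).hom ≫ (Bimod.leftUnitorBimod M).inv.hom =
      (A.mon.one ▷ M.X) ≫ piB (Bimod.regular A) M) ∧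
    -- right unitality constraint
    ((ρ_ M.X).hom ≫ (Bimod.rightUnitorBimod M).inv.hom =
      (M.X ◁ A.mon.one) ≫ piB M (Bimod.regular A)) := by
  refine ⟨?_, ?_, ?_⟩
  · dsimp [piB, Bimod.associatorBimod, Bimod.isoOfIso, Bimod.AssociatorBimod.hom]
    slice_rhs 2 3 => erw [coequalizer.π_desc]
    dsimp [Bimod.AssociatorBimod.homAux]
    slice_rhs 1 3 => erw [π_tensor_id_preserves_coequalizer_inv_desc]
    rfl
  · dsimp [piB, Bimod.leftUnitorBimod, Bimod.isoOfIso, Bimod.LeftUnitorBimod.inv]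
    exact Iso.hom_inv_id_assoc _ _
  · dsimp [piB, Bimod.rightUnitorBimod, Bimod.isoOfIso, Bimod.RightUnitorBimod.inv]
    exact Iso.hom_inv_id_assoc _ _

end Stmt17
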